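/- Let T be a linear relation from H to K with P the orthogonal projection onto mul T**. Then T*T ⊆ T* T_reg = (T_reg)* T_reg, where T_reg = (I−P)T. -/

import Mathlib

/-- The adjoint of a linear relation `T ⊆ H × K`, as a set of pairs in `K × H`. -/
def adjRel {H K : Type*} [NormedAddCommGroup H] [InnerProductSpace ℂ H]
    [NormedAddCommGroup K] [InnerProductSpace ℂ K]
    (T : Set (H × K)) : Set (K × H) :=
  {q | ∀ p ∈ T, (inner ℂ p.2 q.1 : ℂ) = inner ℂ p.1 q.2}

/-- An element of the domain of the adjoint is orthogonal to `mul` of the closure. -/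
lemma mem_orth_of_adjRel {H K : Type*} [NormedAddCommGroup H] [InnerProductSpace ℂ H]
    [NormedAddCommGroup K] [InnerProductSpace ℂ K]
    (T : Submodule ℂ (H × K)) (M : Submodule ℂ K)
    (hM : M = Submodule.comap (LinearMap.inr ℂ H K) T.topologicalClosure)
    {h : K} {g : H} (hadj : (h, g) ∈ adjRel (T : Set (H × K))) : h ∈ Mᗮ := by
  rw [Submodule.mem_orthogonal]
  intro u hu
  rw [hM, Submodule.mem_comap] at hu
  have hcl : ((0 : H), u) ∈ closure (T : Set (H × K)) := by
    have : ((LinearMap.inr ℂ H K) u : H × K) ∈ (T.topologicalClosure : Set (H × K)) := hu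
    simpa [Submodule.topologicalClosure_coe] using this
  have hclosed : IsClosed {p : H × K | (inner ℂ p.2 h : ℂ) = inner ℂ p.1 g} :=
    isClosed_eq (continuous_snd.inner continuous_const) (continuous_fst.inner continuous_const)
  have hsub : (T : Set (H × K)) ⊆ {p : H × K | (inner ℂ p.2 h : ℂ) = inner ℂ p.1 g} :=
    fun p hp => hadj p hp
  have hmem := closure_minimal hsub hclosed hcl
  simpa using hmem

/-- For a linear relation `T` with `P` the orthogonal projection onto `mul T**`:
`T*T ⊆ T* T_reg = (T_reg)* T_reg`, where `T_reg = (I−P)T`. -/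
theorem adjoint_comp_regular_part
    {H K : Type*} [NormedAddCommGroup H] [InnerProductSpace ℂ H] [CompleteSpace H]
    [NormedAddCommGroup K] [InnerProductSpace ℂ K] [CompleteSpace K]
    (T : Submodule ℂ (H × K))
    (M : Submodule ℂ K)
    (hM : M = Submodule.comap (LinearMap.inr ℂ H K) T.topologicalClosure)
    (P : K →L[ℂ] K) (hP : ∀ k : K, P k ∈ M ∧ k - P k ∈ Mᗮ)
    (Treg : Submodule ℂ (H × K))
    (hTreg : Treg = Submodule.map
      (LinearMap.prodMap (LinearMap.id : H →ₗ[ℂ] H)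
        ((ContinuousLinearMap.id ℂ K - P) : K →L[ℂ] K).toLinearMap) T) :
    ({q : H × H | ∃ h : K, (q.1, h) ∈ T ∧ (h, q.2) ∈ adjRel (T : Set (H × K))} ⊆
      {q : H × H | ∃ h : K, (q.1, h) ∈ Treg ∧ (h, q.2) ∈ adjRel (T : Set (H × K))}) ∧
    ({q : H × H | ∃ h : K, (q.1, h) ∈ Treg ∧ (h, q.2) ∈ adjRel (T : Set (H × K))} =
      {q : H × H | ∃ h : K, (q.1, h) ∈ Treg ∧
        (h, q.2) ∈ adjRel (Treg : Set (H × K))}) := by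
  -- If x ∈ Mᗮ then P x = 0
  have hP0 : ∀ x : K, x ∈ Mᗮ → P x = 0 := by
    intro x hx
    have h1 : P x ∈ Mᗮ := by
      have : P x = x - (x - P x) := (sub_sub_cancel x (P x)).symm
      rw [this]
      exact Submodule.sub_mem _ hx (hP x).2
    have h2 : (inner ℂ (P x) (P x) : ℂ) = 0 :=
      (Submodule.mem_orthogonal _ _).mp h1 (P x) (hP x).1
    exact inner_self_eq_zero.mp h2
  -- Elements appearing as second coordinates of Treg lie in Mᗮ
  have hTregOrth : ∀ f : H, ∀ h : K, (f, h) ∈ Treg → h ∈ Mᗮ := by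
    intro f h hmem
    rw [hTreg, Submodule.mem_map] at hmem
    obtain ⟨p, hpT, hpeq⟩ := hmem
    have h2 : h = p.2 - P p.2 := by
      have := congrArg Prod.snd hpeq
      simpa [ContinuousLinearMap.sub_apply, sub_eq_sub_iff_sub_eq_sub] using this.symm
    rw [h2]
    exact (hP p.2).2
  constructor
  · rintro ⟨f, g⟩ ⟨h, hT, hadj⟩
    refine ⟨h, ?_, hadj⟩
    have horth : h ∈ Mᗮ := mem_orth_of_adjRel T M hM hadj
    have hPh : P h = 0 := hP0 h horth
    rw [hTreg, Submodule.mem_map]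
    exact ⟨(f, h), hT, by simp [ContinuousLinearMap.sub_apply, hPh]⟩
  · ext ⟨f, g⟩
    simp only [Set.mem_setOf_eq]
    constructor
    · rintro ⟨h, hTr, hadj⟩
      refine ⟨h, hTr, ?_⟩
      have horth : h ∈ Mᗮ := hTregOrth f h hTr
      rintro ⟨p1, p2⟩ hp
      rw [SetLike.mem_coe, hTreg, Submodule.mem_map] at hp
      obtain ⟨q, hqT, hqeq⟩ := hp
      have h1 : p1 = q.1 := (congrArg Prod.fst hqeq).symm
      have h2 : p2 = q.2 - P q.2 := by
        have := congrArg Prod.snd hqeq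
        simpa [ContinuousLinearMap.sub_apply] using this.symm
      have hPq : (inner ℂ (P q.2) h : ℂ) = 0 :=
        (Submodule.mem_orthogonal _ _).mp horth (P q.2) (hP q.2).1
      have := hadj q hqT
      simp only [h1, h2, inner_sub_left, hPq, sub_zero]
      exact this
    · rintro ⟨h, hTr, hadj⟩
      refine ⟨h, hTr, ?_⟩
      have horth : h ∈ Mᗮ := hTregOrth f h hTr
      rintro ⟨p1, p2⟩ hp
      have hreg : (p1, p2 - P p2) ∈ Treg := by
        rw [hTreg, Submodule.mem_map]
        exact ⟨(p1, p2), hp, by simp [ContinuousLinearMap.sub_apply]⟩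
      have hPp : (inner ℂ (P p2) h : ℂ) = 0 :=
        (Submodule.mem_orthogonal _ _).mp horth (P p2) (hP p2).1
      have := hadj (p1, p2 - P p2) hreg
      simpa [inner_sub_left, hPp] using this
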